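/- For any H-module algebra R, the H-Baer radical r_{Hb}(R) equals W_H(R), the set of all H-m-nilpotent elements of R. -/

import Mathlib

open scoped TensorProduct

class HModAlg (k H R : Type*) [CommRing k] [Ring H] [Algebra k H]
    [Coalgebra k H] [NonUnitalRing R] [Module k R]
    [SMulCommClass k R R] [IsScalarTower k R R] where
  hsmul : H →ₗ[k] R →ₗ[k] R
  one_hsmul : ∀ r : R, hsmul 1 r = r
  mul_hsmul : ∀ (h h' : H) (r : R), hsmul (h * h') r = hsmul h (hsmul h' r)
  hsmul_mul : ∀ (h : H) (a b : R),
    hsmul h (a * b) =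
      LinearMap.mul' k R
        (TensorProduct.map (hsmul.flip a) (hsmul.flip b) (Coalgebra.comul h))

/-- product f 0 * f 1 * ⋯ * f n -/
def prodSeq {R : Type*} [Mul R] (f : ℕ → R) : ℕ → R
  | 0 => f 0
  | n + 1 => prodSeq f n * f (n + 1)

/-- `I` is a nilpotent subset: some power of it vanishes. -/
def IsNilpotentSet {R : Type*} [Mul R] [Zero R] (I : Set R) : Prop :=
  ∃ n : ℕ, ∀ f : ℕ → R, (∀ i, f i ∈ I) → prodSeq f n = 0

/-- `I` is nilpotent modulo `J`. -/
def IsNilpotentSetMod {R : Type*} [Mul R] (I J : Set R) : Prop :=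
  ∃ n : ℕ, ∀ f : ℕ → R, (∀ i, f i ∈ I) → prodSeq f n ∈ J

section Defs

variable (k H : Type*) {R : Type*} [CommRing k] [Ring H] [Algebra k H]
  [Coalgebra k H] [NonUnitalRing R] [Module k R]
  [SMulCommClass k R R] [IsScalarTower k R R] [HModAlg k H R]

/-- The action of `h : H` on `r : R`. -/
def hact (h : H) (r : R) : R := HModAlg.hsmul (k := k) h r

/-- `I` is an `H`-ideal of the `H`-module (sub)algebra `B ⊆ R`. -/
structure IsHIdealIn (B I : Set R) : Prop where
  subset : I ⊆ B
  zero_mem : (0 : R) ∈ I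
  add_mem : ∀ {x y : R}, x ∈ I → y ∈ I → x + y ∈ I
  neg_mem : ∀ {x : R}, x ∈ I → -x ∈ I
  mul_mem_left : ∀ {x : R}, x ∈ B → ∀ {y : R}, y ∈ I → x * y ∈ I
  mul_mem_right : ∀ {x : R}, x ∈ I → ∀ {y : R}, y ∈ B → x * y ∈ I
  hsmul_mem : ∀ (h : H) {x : R}, x ∈ I → hact k H h x ∈ I

/-- `I` is an `H`-ideal of `R`. -/
def IsHIdeal (I : Set R) : Prop := IsHIdealIn k H Set.univ I

/-- `R` is `H`-semiprime. -/
def IsHSemiprime : Prop :=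
  ∀ I : Set R, IsHIdeal k H I → IsNilpotentSet I → I = {0}

/-- The subalgebra `B` of `R` is `H`-semiprime. -/
def IsHSemiprimeIn (B : Set R) : Prop :=
  ∀ I : Set R, IsHIdealIn k H B I → IsNilpotentSet I → I = {0}

/-- `R` is `H`-prime. -/
def IsHPrime : Prop :=
  ∀ I J : Set R, IsHIdeal k H I → IsHIdeal k H J →
    (∀ a ∈ I, ∀ b ∈ J, a * b = 0) → I = {0} ∨ J = {0}

/-- The `H`-ideal of `R` generated by `E`. -/
def genHIdeal (E : Set R) : Set R := ⋂₀ {I : Set R | IsHIdeal k H I ∧ E ⊆ I}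

end Defs


section Radical

variable (k H : Type*) {R : Type*} [CommRing k] [Ring H] [Algebra k H]
  [Coalgebra k H] [NonUnitalRing R] [Module k R]
  [SMulCommClass k R R] [IsScalarTower k R R] [HModAlg k H R]

/-- The `H`-ideal `I` is a radical (`r_{Hb}`-) `H`-ideal: every non-zero
`H`-homomorphic image of `I` (equivalently, every quotient `I/J` of `I` by a proper
`H`-ideal `J` of `I`) contains a non-zero nilpotent `H`-ideal `K/J`. -/
def IsRadicalHIdeal (I : Set R) : Prop :=
  IsHIdeal k H I ∧
    ∀ J : Set R, IsHIdealIn k H I J → J ≠ I →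
      ∃ K : Set R, IsHIdealIn k H I K ∧ J ⊆ K ∧ J ≠ K ∧ IsNilpotentSetMod K J

/-- `B` is the `H`-Baer radical of `R`: the largest radical `H`-ideal of `R`. -/
def IsHBaerRadical (B : Set R) : Prop :=
  IsRadicalHIdeal k H B ∧ ∀ I : Set R, IsRadicalHIdeal k H I → I ⊆ B

end Radical

/-- The set `W_H(R)` of `H`-`m`-nilpotent elements. -/
def WHset (k H : Type*) {R : Type*} [CommRing k] [Ring H] [Algebra k H]
    [Coalgebra k H] [NonUnitalRing R] [Module k R] [SMulCommClass k R R]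
    [IsScalarTower k R R] [HModAlg k H R] : Set R :=
  {a : R | ∀ (s b : ℕ → R) (h h' : ℕ → H), s 0 = a →
    (∀ n, s (n + 1) = hact k H (h n) (s n) * b n * hact k H (h' n) (s n)) →
    ∃ n, s n = 0}

section Tools

variable (k H : Type*) {R : Type*} [CommRing k] [Ring H] [Algebra k H]
  [Coalgebra k H] [NonUnitalRing R] [Module k R]
  [SMulCommClass k R R] [IsScalarTower k R R] [HModAlg k H R]

lemma hact_zero (h : H) : hact k H h (0 : R) = 0 := map_zero _

lemma hact_add (h : H) (x y : R) :
    hact k H h (x + y) = hact k H h x + hact k H h y := map_add _ _ _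

lemma hact_neg (h : H) (x : R) : hact k H h (-x) = - hact k H h x := map_neg _ _

lemma hact_one (x : R) : hact k H 1 x = x := HModAlg.one_hsmul x

lemma hact_hact (g h : H) (x : R) :
    hact k H g (hact k H h x) = hact k H (g * h) x :=
  (HModAlg.mul_hsmul g h x).symm

/-- Key fact: the action of `h` on a product `x * y` lands in any additive
subgroup containing all products `(g·x) * (g'·y)`. -/
lemma hact_mul_mem (G : AddSubgroup R) {x y : R}
    (hxy : ∀ g g' : H, hact k H g x * hact k H g' y ∈ G) (h : H) :
    hact k H h (x * y) ∈ G := by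
  show (HModAlg.hsmul h) (x * y) ∈ G
  rw [HModAlg.hsmul_mul]
  induction Coalgebra.comul (R := k) h using TensorProduct.induction_on with
  | zero => simpa using zero_mem G
  | tmul p q => simpa [hact] using hxy p q
  | add u v hu hv => rw [map_add, map_add]; exact add_mem hu hv

end Tools

section Gadget

variable {R : Type*} [NonUnitalRing R]

/-- `c`, `u*c`, `c*v`, `u*c*v` with `c ∈ C`, `u v ∈ U`. -/
def genSet (C U : Set R) : Set R :=
  {z | ∃ c ∈ C, z = c ∨ (∃ u ∈ U, z = u * c) ∨ (∃ v ∈ U, z = c * v) ∨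
    (∃ u ∈ U, ∃ v ∈ U, z = u * c * v)}

/-- The additive subgroup generated by `genSet C U`. -/
def genGrp (C U : Set R) : AddSubgroup R := AddSubgroup.closure (genSet C U)

lemma core_mem_genGrp {C U : Set R} {c : R} (hc : c ∈ C) : c ∈ genGrp C U :=
  AddSubgroup.subset_closure ⟨c, hc, Or.inl rfl⟩

lemma genSet_mul_left {C U : Set R} (hU : ∀ u ∈ U, ∀ v ∈ U, u * v ∈ U)
    {u : R} (hu : u ∈ U) {z : R} (hz : z ∈ genSet C U) : u * z ∈ genSet C U := by
  obtain ⟨c, hc, h | ⟨v, hv, h⟩ | ⟨v, hv, h⟩ | ⟨v, hv, w, hw, h⟩⟩ := hz <;> rw [h]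
  · exact ⟨c, hc, Or.inr (Or.inl ⟨u, hu, rfl⟩)⟩
  · exact ⟨c, hc, Or.inr (Or.inl ⟨u * v, hU u hu v hv, by simp only [mul_assoc]⟩)⟩
  · exact ⟨c, hc, Or.inr (Or.inr (Or.inr ⟨u, hu, v, hv, by simp only [mul_assoc]⟩))⟩
  · exact ⟨c, hc, Or.inr (Or.inr (Or.inr ⟨u * v, hU u hu v hv, w, hw,
      by simp only [mul_assoc]⟩))⟩

lemma genSet_mul_right {C U : Set R} (hU : ∀ u ∈ U, ∀ v ∈ U, u * v ∈ U)
    {v : R} (hv : v ∈ U) {z : R} (hz : z ∈ genSet C U) : z * v ∈ genSet C U := by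
  obtain ⟨c, hc, h | ⟨u, hu, h⟩ | ⟨w, hw, h⟩ | ⟨u, hu, w, hw, h⟩⟩ := hz <;> rw [h]
  · exact ⟨c, hc, Or.inr (Or.inr (Or.inl ⟨v, hv, rfl⟩))⟩
  · exact ⟨c, hc, Or.inr (Or.inr (Or.inr ⟨u, hu, v, hv, by simp only [mul_assoc]⟩))⟩
  · exact ⟨c, hc, Or.inr (Or.inr (Or.inl ⟨w * v, hU w hw v hv, by simp only [mul_assoc]⟩))⟩
  · exact ⟨c, hc, Or.inr (Or.inr (Or.inr ⟨u, hu, w * v, hU w hw v hv,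
      by simp only [mul_assoc]⟩))⟩

lemma genGrp_mul_left {C U : Set R} (hU : ∀ u ∈ U, ∀ v ∈ U, u * v ∈ U)
    {u : R} (hu : u ∈ U) {z : R} (hz : z ∈ genGrp C U) : u * z ∈ genGrp C U := by
  induction hz using AddSubgroup.closure_induction with
  | mem w hw => exact AddSubgroup.subset_closure (genSet_mul_left hU hu hw)
  | zero => rw [mul_zero]; exact zero_mem _
  | add a b _ _ ha hb => rw [mul_add]; exact add_mem ha hb
  | neg a _ ha => rw [mul_neg]; exact neg_mem ha

lemma genGrp_mul_right {C U : Set R} (hU : ∀ u ∈ U, ∀ v ∈ U, u * v ∈ U)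
    {v : R} (hv : v ∈ U) {z : R} (hz : z ∈ genGrp C U) : z * v ∈ genGrp C U := by
  induction hz using AddSubgroup.closure_induction with
  | mem w hw => exact AddSubgroup.subset_closure (genSet_mul_right hU hv hw)
  | zero => rw [zero_mul]; exact zero_mem _
  | add a b _ _ ha hb => rw [add_mul]; exact add_mem ha hb
  | neg a _ ha => rw [neg_mul]; exact neg_mem ha

/-- elements whose product with every element of `U` (on the right) is in `G` -/
def rmulGrp (U : Set R) (G : AddSubgroup R) : AddSubgroup R where
  carrier := {z | ∀ w ∈ U, z * w ∈ G}
  zero_mem' := fun w _ => by rw [zero_mul]; exact zero_mem _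
  add_mem' := fun ha hb w hw => by rw [add_mul]; exact add_mem (ha w hw) (hb w hw)
  neg_mem' := fun ha w hw => by rw [neg_mul]; exact neg_mem (ha w hw)

lemma mem_rmulGrp {U : Set R} {G : AddSubgroup R} {z : R} :
    z ∈ rmulGrp U G ↔ ∀ w ∈ U, z * w ∈ G := Iff.rfl

end Gadget

section Gadget2

variable (k H : Type*) {R : Type*} [CommRing k] [Ring H] [Algebra k H]
  [Coalgebra k H] [NonUnitalRing R] [Module k R]
  [SMulCommClass k R R] [IsScalarTower k R R] [HModAlg k H R]

lemma genGrp_hact {C U : Set R} (hC : ∀ (h : H) {c : R}, c ∈ C → hact k H h c ∈ C)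
    (hUH : ∀ (h : H) {u : R}, u ∈ U → hact k H h u ∈ U) (h : H) {z : R}
    (hz : z ∈ genGrp C U) : hact k H h z ∈ genGrp C U := by
  induction hz using AddSubgroup.closure_induction with
  | zero => rw [hact_zero]; exact zero_mem _
  | add a b _ _ ha hb => rw [hact_add]; exact add_mem ha hb
  | neg a _ ha => rw [hact_neg]; exact neg_mem ha
  | mem w hw =>
    obtain ⟨c, hc, hw | ⟨u, hu, hw⟩ | ⟨v, hv, hw⟩ | ⟨u, hu, v, hv, hw⟩⟩ := hw <;> rw [hw]
    · exact core_mem_genGrp (hC h hc)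
    · exact hact_mul_mem k H (genGrp C U) (fun g g' => AddSubgroup.subset_closure
        ⟨hact k H g' c, hC g' hc, Or.inr (Or.inl ⟨hact k H g u, hUH g hu, rfl⟩)⟩) h
    · exact hact_mul_mem k H (genGrp C U) (fun g g' => AddSubgroup.subset_closure
        ⟨hact k H g c, hC g hc, Or.inr (Or.inr (Or.inl ⟨hact k H g' v, hUH g' hv, rfl⟩))⟩) h
    · refine hact_mul_mem k H (genGrp C U) (fun g g' => ?_) h
      have hmem : hact k H g (u * c) ∈ rmulGrp U (genGrp C U) := by
        refine hact_mul_mem k H (rmulGrp U (genGrp C U)) (fun p q => ?_) g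
        rw [mem_rmulGrp]
        intro w hw
        exact AddSubgroup.subset_closure ⟨hact k H q c, hC q hc,
          Or.inr (Or.inr (Or.inr ⟨hact k H p u, hUH p hu, w, hw, rfl⟩))⟩
      exact mem_rmulGrp.mp hmem _ (hUH g' hv)

end Gadget2

section Strip

variable {R : Type*} [NonUnitalRing R]

lemma strip {C₁ C₂ U P : Set R}
    (hP0 : (0:R) ∈ P) (hPadd : ∀ x ∈ P, ∀ y ∈ P, x + y ∈ P)
    (hPneg : ∀ x ∈ P, -x ∈ P)
    (hUP : ∀ u ∈ U, ∀ z ∈ P, u * z ∈ P) (hPU : ∀ z ∈ P, ∀ v ∈ U, z * v ∈ P)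
    (hyp : ∀ c₁ ∈ C₁, ∀ r : R, ∀ c₂ ∈ C₂, c₁ * r * c₂ ∈ P)
    {q : R} (hq : q ∈ genGrp C₁ U) (r : R) {q' : R} (hq' : q' ∈ genGrp C₂ U) :
    q * r * q' ∈ P := by
  induction hq' using AddSubgroup.closure_induction with
  | zero => rw [mul_zero]; exact hP0
  | add a b _ _ ha hb => rw [mul_add]; exact hPadd _ ha _ hb
  | neg a _ ha => rw [mul_neg]; exact hPneg _ ha
  | mem t' ht' =>
    induction hq using AddSubgroup.closure_induction with
    | zero => rw [zero_mul, zero_mul]; exact hP0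
    | add a b _ _ ha hb => rw [add_mul, add_mul]; exact hPadd _ ha _ hb
    | neg a _ ha => rw [neg_mul, neg_mul]; exact hPneg _ ha
    | mem t ht =>
      obtain ⟨c₁, hc₁, h1 | ⟨u, hu, h1⟩ | ⟨v, hv, h1⟩ | ⟨u, hu, v, hv, h1⟩⟩ := ht <;>
        obtain ⟨c₂, hc₂, h2 | ⟨u', hu', h2⟩ | ⟨v', hv', h2⟩ | ⟨u', hu', v', hv', h2⟩⟩ := ht' <;>
        rw [h1, h2]
      · exact hyp c₁ hc₁ r c₂ hc₂
      · simpa only [mul_assoc] using hyp c₁ hc₁ (r * u') c₂ hc₂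
      · simpa only [mul_assoc] using hPU _ (hyp c₁ hc₁ r c₂ hc₂) _ hv'
      · simpa only [mul_assoc] using hPU _ (hyp c₁ hc₁ (r * u') c₂ hc₂) _ hv'
      · simpa only [mul_assoc] using hUP u hu _ (hyp c₁ hc₁ r c₂ hc₂)
      · simpa only [mul_assoc] using hUP u hu _ (hyp c₁ hc₁ (r * u') c₂ hc₂)
      · simpa only [mul_assoc] using hUP u hu _ (hPU _ (hyp c₁ hc₁ r c₂ hc₂) _ hv')
      · simpa only [mul_assoc] using hUP u hu _ (hPU _ (hyp c₁ hc₁ (r * u') c₂ hc₂) _ hv')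
      · simpa only [mul_assoc] using hyp c₁ hc₁ (v * r) c₂ hc₂
      · simpa only [mul_assoc] using hyp c₁ hc₁ (v * r * u') c₂ hc₂
      · simpa only [mul_assoc] using hPU _ (hyp c₁ hc₁ (v * r) c₂ hc₂) _ hv'
      · simpa only [mul_assoc] using hPU _ (hyp c₁ hc₁ (v * r * u') c₂ hc₂) _ hv'
      · simpa only [mul_assoc] using hUP u hu _ (hyp c₁ hc₁ (v * r) c₂ hc₂)
      · simpa only [mul_assoc] using hUP u hu _ (hyp c₁ hc₁ (v * r * u') c₂ hc₂)
      · simpa only [mul_assoc] using hUP u hu _ (hPU _ (hyp c₁ hc₁ (v * r) c₂ hc₂) _ hv')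
      · simpa only [mul_assoc] using hUP u hu _ (hPU _ (hyp c₁ hc₁ (v * r * u') c₂ hc₂) _ hv')

end Strip

section DotLemmas

variable {k H : Type*} {R : Type*} [CommRing k] [Ring H] [Algebra k H]
  [Coalgebra k H] [NonUnitalRing R] [Module k R]
  [SMulCommClass k R R] [IsScalarTower k R R] [HModAlg k H R]

theorem IsHIdeal.zero_mem {I : Set R} (h : IsHIdeal k H I) : (0:R) ∈ I :=
  IsHIdealIn.zero_mem h

theorem IsHIdeal.add_mem {I : Set R} (h : IsHIdeal k H I) {x y : R}
    (hx : x ∈ I) (hy : y ∈ I) : x + y ∈ I := IsHIdealIn.add_mem h hx hy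

theorem IsHIdeal.neg_mem {I : Set R} (h : IsHIdeal k H I) {x : R} (hx : x ∈ I) : -x ∈ I :=
  IsHIdealIn.neg_mem h hx

theorem IsHIdeal.mul_left {I : Set R} (h : IsHIdeal k H I) (x : R) {y : R} (hy : y ∈ I) :
    x * y ∈ I := IsHIdealIn.mul_mem_left h (Set.mem_univ x) hy

theorem IsHIdeal.mul_right {I : Set R} (h : IsHIdeal k H I) {x : R} (hx : x ∈ I) (y : R) :
    x * y ∈ I := IsHIdealIn.mul_mem_right h hx (Set.mem_univ y)

theorem IsHIdeal.hsmul_mem {I : Set R} (h : IsHIdeal k H I) (g : H) {x : R} (hx : x ∈ I) :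
    hact k H g x ∈ I := IsHIdealIn.hsmul_mem h g hx

/-- The additive subgroup underlying an `H`-ideal in `B`. -/
def IsHIdealIn.toAddSubgroup {B I : Set R} (hI : IsHIdealIn k H B I) : AddSubgroup R where
  carrier := I
  zero_mem' := hI.zero_mem
  add_mem' := fun ha hb => hI.add_mem ha hb
  neg_mem' := fun ha => hI.neg_mem ha

theorem IsHIdealIn.mem_toAddSubgroup {B I : Set R} (hI : IsHIdealIn k H B I) {x : R} :
    x ∈ hI.toAddSubgroup ↔ x ∈ I := Iff.rfl

end DotLemmas

section Plumbing

variable (k H : Type*) {R : Type*} [CommRing k] [Ring H] [Algebra k H]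
  [Coalgebra k H] [NonUnitalRing R] [Module k R]
  [SMulCommClass k R R] [IsScalarTower k R R] [HModAlg k H R]

lemma isHIdeal_singleton_zero : IsHIdeal k H ({0} : Set R) := by
  refine ⟨Set.subset_univ _, rfl, ?_, ?_, ?_, ?_, ?_⟩
  · intro x y hx hy
    simp only [Set.mem_singleton_iff] at *
    rw [hx, hy, add_zero]
  · intro x hx
    simp only [Set.mem_singleton_iff] at *
    rw [hx, neg_zero]
  · intro x _ y hy
    simp only [Set.mem_singleton_iff] at *
    rw [hy, mul_zero]
  · intro x hx y _
    simp only [Set.mem_singleton_iff] at *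
    rw [hx, zero_mul]
  · intro h x hx
    simp only [Set.mem_singleton_iff] at *
    rw [hx, hact_zero]

lemma isHIdeal_add {Q P : Set R} (hQ : IsHIdeal k H Q) (hP : IsHIdeal k H P) :
    IsHIdeal k H {z : R | ∃ q ∈ Q, ∃ p ∈ P, z = q + p} := by
  refine ⟨Set.subset_univ _, ⟨0, hQ.zero_mem, 0, hP.zero_mem, (add_zero 0).symm⟩,
    ?_, ?_, ?_, ?_, ?_⟩
  · rintro x y ⟨q, hq, p, hp, rfl⟩ ⟨q', hq', p', hp', rfl⟩
    exact ⟨q + q', hQ.add_mem hq hq', p + p', hP.add_mem hp hp', by abel⟩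
  · rintro x ⟨q, hq, p, hp, rfl⟩
    exact ⟨-q, hQ.neg_mem hq, -p, hP.neg_mem hp, by abel⟩
  · rintro x - y ⟨q, hq, p, hp, rfl⟩
    exact ⟨x * q, hQ.mul_left x hq, x * p, hP.mul_left x hp, mul_add ..⟩
  · rintro x ⟨q, hq, p, hp, rfl⟩ y -
    exact ⟨q * y, hQ.mul_right hq y, p * y, hP.mul_right hp y, add_mul ..⟩
  · rintro h x ⟨q, hq, p, hp, rfl⟩
    exact ⟨_, hQ.hsmul_mem h hq, _, hP.hsmul_mem h hp, hact_add ..⟩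

lemma exists_maximal_hideal (S : Set R) (h0 : (0:R) ∉ S) :
    ∃ P : Set R, IsHIdeal k H P ∧ (∀ x ∈ S, x ∉ P) ∧
      ∀ I : Set R, IsHIdeal k H I → (∀ x ∈ S, x ∉ I) → P ⊆ I → I ⊆ P := by
  have hchaincond : ∀ c ⊆ {I : Set R | IsHIdeal k H I ∧ ∀ x ∈ S, x ∉ I},
      IsChain (· ⊆ ·) c → c.Nonempty →
      ∃ ub ∈ {I : Set R | IsHIdeal k H I ∧ ∀ x ∈ S, x ∉ I}, ∀ s ∈ c, s ⊆ ub := by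
    rintro c hc hchain ⟨I₀, hI₀⟩
    have hmem : ∀ {x : R} {I}, I ∈ c → x ∈ I → x ∈ ⋃₀ c :=
      fun hI hx => Set.mem_sUnion.2 ⟨_, hI, hx⟩
    have htwo : ∀ {x y : R} {I J}, I ∈ c → J ∈ c → x ∈ I → y ∈ J →
        ∃ L ∈ c, x ∈ L ∧ y ∈ L := by
      intro x y I J hI hJ hx hy
      rcases eq_or_ne I J with rfl | hne
      · exact ⟨I, hI, hx, hy⟩
      · rcases hchain hI hJ hne with hIJ | hJI
        · exact ⟨J, hJ, hIJ hx, hy⟩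
        · exact ⟨I, hI, hx, hJI hy⟩
    refine ⟨⋃₀ c, ⟨⟨Set.subset_univ _, hmem hI₀ (hc hI₀).1.zero_mem, ?_, ?_, ?_, ?_, ?_⟩,
      ?_⟩, fun s hs => Set.subset_sUnion_of_mem hs⟩
    · rintro x y ⟨I, hI, hx⟩ ⟨J, hJ, hy⟩
      obtain ⟨L, hL, hx', hy'⟩ := htwo hI hJ hx hy
      exact hmem hL ((hc hL).1.add_mem hx' hy')
    · rintro x ⟨I, hI, hx⟩
      exact hmem hI ((hc hI).1.neg_mem hx)
    · rintro x - y ⟨I, hI, hy⟩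
      exact hmem hI ((hc hI).1.mul_left x hy)
    · rintro x ⟨I, hI, hx⟩ y -
      exact hmem hI ((hc hI).1.mul_right hx y)
    · rintro h x ⟨I, hI, hx⟩
      exact hmem hI ((hc hI).1.hsmul_mem h hx)
    · rintro x hx ⟨I, hI, hxI⟩
      exact (hc hI).2 x hx hxI
  obtain ⟨m, -, hmax⟩ := zorn_subset_nonempty
      {I : Set R | IsHIdeal k H I ∧ ∀ x ∈ S, x ∉ I} hchaincond {0}
      ⟨isHIdeal_singleton_zero k H,
        fun x hx hx0 => h0 (by rwa [Set.mem_singleton_iff.mp hx0] at hx)⟩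
  exact ⟨m, hmax.1.1, hmax.1.2, fun I hI hIS hmI => hmax.2 ⟨hI, hIS⟩ hmI⟩

end Plumbing

section Primes

variable (k H : Type*) {R : Type*} [CommRing k] [Ring H] [Algebra k H]
  [Coalgebra k H] [NonUnitalRing R] [Module k R]
  [SMulCommClass k R R] [IsScalarTower k R R] [HModAlg k H R]

/-- The collection of "`H`-prime-like" ideals of `R`. -/
def PrimeSet : Set (Set R) :=
  {P | IsHIdeal k H P ∧ ∀ Q Q' : Set R, IsHIdeal k H Q → IsHIdeal k H Q' →
    (∀ q ∈ Q, ∀ r : R, ∀ q' ∈ Q', q * r * q' ∈ P) → Q ⊆ P ∨ Q' ⊆ P}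

lemma univ_mul_closed : ∀ u ∈ (Set.univ : Set R), ∀ v ∈ Set.univ, u * v ∈ Set.univ :=
  fun _ _ _ _ => Set.mem_univ _

lemma isHIdeal_genGrp {C : Set R} (hC : ∀ (h : H) {c : R}, c ∈ C → hact k H h c ∈ C) :
    IsHIdeal k H (genGrp C Set.univ : Set R) := by
  refine ⟨Set.subset_univ _, ?_, ?_, ?_, ?_, ?_, ?_⟩
  · exact zero_mem _
  · exact fun hx hy => add_mem hx hy
  · exact fun hx => neg_mem hx
  · exact fun {x} _ {y} hy => genGrp_mul_left univ_mul_closed (Set.mem_univ x) hy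
  · exact fun {x} hx {y} _ => genGrp_mul_right univ_mul_closed (Set.mem_univ y) hx
  · exact fun h {x} hx => genGrp_hact k H hC (fun _ {u} _ => Set.mem_univ _) h hx

/-- The orbit of `x` under the `H`-action. -/
def coneSet (x : R) : Set R := {z | ∃ g : H, z = hact k H g x}

lemma coneSet_hact {x : R} : ∀ (h : H) {c : R}, c ∈ coneSet k H x →
    hact k H h c ∈ coneSet k H x := by
  rintro h c ⟨g, rfl⟩
  exact ⟨h * g, hact_hact k H h g x⟩

lemma mem_coneGrp_self (x : R) : x ∈ genGrp (coneSet k H x) Set.univ :=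
  core_mem_genGrp ⟨1, (hact_one k H x).symm⟩

lemma prime_elementwise {P : Set R} (hP : P ∈ PrimeSet k H) {x y : R}
    (hx : x ∉ P) (hy : y ∉ P) :
    ∃ (g : H) (r : R) (g' : H), hact k H g x * r * hact k H g' y ∉ P := by
  by_contra hcon
  push_neg at hcon
  have hstr : ∀ q ∈ genGrp (coneSet k H x) Set.univ, ∀ r : R,
      ∀ q' ∈ genGrp (coneSet k H y) Set.univ, q * r * q' ∈ P := by
    intro q hq r q' hq'
    refine strip hP.1.zero_mem (fun a ha b hb => hP.1.add_mem ha hb)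
      (fun a ha => hP.1.neg_mem ha) (fun u _ z hz => hP.1.mul_left u hz)
      (fun z hz v _ => hP.1.mul_right hz v) ?_ hq r hq'
    rintro c₁ ⟨g, rfl⟩ r' c₂ ⟨g', rfl⟩
    exact hcon g r' g'
  rcases hP.2 _ _ (isHIdeal_genGrp k H (coneSet_hact k H))
      (isHIdeal_genGrp k H (coneSet_hact k H)) hstr with h | h
  · exact hx (h (mem_coneGrp_self k H x))
  · exact hy (h (mem_coneGrp_self k H y))

lemma exists_mseq (good : R → Prop) (a : R) (ha : good a)
    (step : ∀ x : R, good x → ∃ (g : H) (r : R) (g' : H),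
      good (hact k H g x * r * hact k H g' x)) :
    ∃ (s b : ℕ → R) (h h' : ℕ → H), s 0 = a ∧
      (∀ n, s (n + 1) = hact k H (h n) (s n) * b n * hact k H (h' n) (s n)) ∧
      ∀ n, good (s n) := by
  choose g r g' hg using step
  let F : {x : R // good x} → {x : R // good x} :=
    fun x => ⟨hact k H (g x.1 x.2) x.1 * r x.1 x.2 * hact k H (g' x.1 x.2) x.1, hg x.1 x.2⟩
  let S : ℕ → {x : R // good x} := fun n => F^[n] ⟨a, ha⟩
  have hS : ∀ n, S (n + 1) = F (S n) := fun n => Function.iterate_succ_apply' F n _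
  refine ⟨fun n => (S n).1, fun n => r (S n).1 (S n).2, fun n => g (S n).1 (S n).2,
    fun n => g' (S n).1 (S n).2, rfl, fun n => by show (S (n+1)).1 = _; rw [hS n], fun n => (S n).2⟩

lemma WHset_subset_prime {P : Set R} (hP : P ∈ PrimeSet k H) :
    WHset k H (R := R) ⊆ P := by
  intro a ha
  by_contra haP
  obtain ⟨s, b, h, h', hs0, hrec, hgood⟩ := exists_mseq k H (fun x => x ∉ P) a haP
    (fun x hx => prime_elementwise k H hP hx hx)
  obtain ⟨n, hn⟩ := ha s b h h' hs0 hrec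
  exact hgood n (by rw [hn]; exact hP.1.zero_mem)

lemma sInter_primeSet_subset_WHset :
    ⋂₀ PrimeSet k H (R := R) ⊆ WHset k H := by
  intro a ha
  intro s b h h' hs0 hrec
  by_contra hcon
  push_neg at hcon
  obtain ⟨P, hPid, hdisj, hmax⟩ := exists_maximal_hideal k H (Set.range s)
    (by rintro ⟨n, hn⟩; exact hcon n hn)
  have hPrime : P ∈ PrimeSet k H := by
    refine ⟨hPid, ?_⟩
    intro Q Q' hQ hQ' hprod
    by_contra hcon2
    push_neg at hcon2
    obtain ⟨hQP, hQ'P⟩ := hcon2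
    have key : ∀ A : Set R, IsHIdeal k H A → ¬A ⊆ P →
        ∃ i, s i ∈ {z : R | ∃ q ∈ A, ∃ p ∈ P, z = q + p} := by
      intro A hA hAP
      by_contra hno
      push_neg at hno
      have hsub : {z : R | ∃ q ∈ A, ∃ p ∈ P, z = q + p} ⊆ P := by
        refine hmax _ (isHIdeal_add k H hA hPid) ?_ ?_
        · rintro x ⟨i, rfl⟩ hxI
          exact hno i hxI
        · intro p hp
          exact ⟨0, hA.zero_mem, p, hp, (zero_add p).symm⟩
      exact hAP (fun q hq => hsub ⟨q, hq, 0, hPid.zero_mem, (add_zero q).symm⟩)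
    obtain ⟨i, hi⟩ := key Q hQ hQP
    obtain ⟨j, hj⟩ := key Q' hQ' hQ'P
    have hprop : ∀ A : Set R, IsHIdeal k H A → ∀ i, s i ∈ A → ∀ m, s (i + m) ∈ A := by
      intro A hA i hi m
      induction m with
      | zero => exact hi
      | succ m ih =>
        have he : i + (m + 1) = (i + m) + 1 := by omega
        rw [he, hrec]
        exact hA.mul_right (hA.mul_right (hA.hsmul_mem _ ih) _) _
    have hQPid := isHIdeal_add k H hQ hPid
    have hQP'id := isHIdeal_add k H hQ' hPid
    have h1 : s (max i j) ∈ {z : R | ∃ q ∈ Q, ∃ p ∈ P, z = q + p} := by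
      have := hprop _ hQPid i hi (max i j - i)
      rwa [Nat.add_sub_cancel' (le_max_left i j)] at this
    have h2 : s (max i j) ∈ {z : R | ∃ q ∈ Q', ∃ p ∈ P, z = q + p} := by
      have := hprop _ hQP'id j hj (max i j - j)
      rwa [Nat.add_sub_cancel' (le_max_right i j)] at this
    have hnext : s (max i j + 1) ∈ P := by
      rw [hrec]
      obtain ⟨q, hq, p, hp, he⟩ := hQPid.hsmul_mem (h (max i j)) h1
      obtain ⟨q', hq', p', hp', he'⟩ := hQP'id.hsmul_mem (h' (max i j)) h2
      rw [he, he']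
      set bb := b (max i j)
      have expand : (q + p) * bb * (q' + p') =
          (q * bb * q' + q * bb * p') + (p * bb * q' + p * bb * p') := by
        rw [add_mul, add_mul, mul_add, mul_add]
      rw [expand]
      refine hPid.add_mem (hPid.add_mem (hprod q hq bb q' hq') ?_) (hPid.add_mem ?_ ?_)
      · exact hPid.mul_left _ hp'
      · exact hPid.mul_right (hPid.mul_right hp _) _
      · exact hPid.mul_right (hPid.mul_right hp _) _
    exact hdisj _ ⟨max i j + 1, rfl⟩ hnext
  exact hdisj (s 0) ⟨0, rfl⟩ (by rw [hs0]; exact ha P hPrime)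

lemma WHset_eq_sInter : WHset k H (R := R) = ⋂₀ PrimeSet k H := by
  apply subset_antisymm
  · intro a ha P hP
    exact WHset_subset_prime k H hP ha
  · exact sInter_primeSet_subset_WHset k H

lemma isHIdeal_WHset : IsHIdeal k H (WHset k H (R := R)) := by
  rw [WHset_eq_sInter]
  refine ⟨Set.subset_univ _, ?_, ?_, ?_, ?_, ?_, ?_⟩
  · exact fun P hP => hP.1.zero_mem
  · intro x y hx hy P hP
    exact hP.1.add_mem (hx P hP) (hy P hP)
  · intro x hx P hP
    exact hP.1.neg_mem (hx P hP)
  · intro x _ y hy P hP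
    exact hP.1.mul_left x (hy P hP)
  · intro x hx y _ P hP
    exact hP.1.mul_right (hx P hP) y
  · intro h x hx P hP
    exact hP.1.hsmul_mem h (hx P hP)

end Primes

section ProdSeqLemmas

variable {R : Type*} [NonUnitalRing R]

lemma prodSeq_succ (f : ℕ → R) (n : ℕ) : prodSeq f (n + 1) = prodSeq f n * f (n + 1) := rfl

lemma prodSeq_congr {f g : ℕ → R} (m : ℕ) (h : ∀ i ≤ m, f i = g i) :
    prodSeq f m = prodSeq g m := by
  induction m with
  | zero => exact h 0 le_rfl
  | succ m ih =>
    rw [prodSeq_succ, prodSeq_succ, ih (fun i hi => h i (Nat.le_succ_of_le hi)),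
      h (m + 1) le_rfl]

lemma prodSeq_concat (f g : ℕ → R) (p q : ℕ) :
    prodSeq f p * prodSeq g q =
      prodSeq (fun i => if i ≤ p then f i else g (i - (p + 1))) (p + q + 1) := by
  induction q with
  | zero =>
    have h1 : p + 0 + 1 = p + 1 := by omega
    rw [h1, prodSeq_succ]
    have h2 : prodSeq (fun i => if i ≤ p then f i else g (i - (p + 1))) p = prodSeq f p :=
      prodSeq_congr p (fun i hi => if_pos hi)
    have h3 : (if p + 1 ≤ p then f (p + 1) else g ((p + 1) - (p + 1))) = g 0 := by
      rw [if_neg (by omega), Nat.sub_self]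
    rw [h2, h3]
    rfl
  | succ q ih =>
    have h1 : p + (q + 1) + 1 = (p + q + 1) + 1 := by omega
    rw [h1, prodSeq_succ _ (p + q + 1), ← ih, prodSeq_succ g q, ← mul_assoc]
    congr 1
    rw [if_neg (by omega)]
    congr 1
    omega

lemma prodSeq_group3 (f : ℕ → R) (n : ℕ) :
    prodSeq f (3 * n + 2) = prodSeq (fun i => f (3 * i) * f (3 * i + 1) * f (3 * i + 2)) n := by
  induction n with
  | zero =>
    have h0 : 3 * 0 + 2 = 0 + 1 + 1 := by omega
    rw [h0, prodSeq_succ, prodSeq_succ]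
    show prodSeq f 0 * f (0 + 1) * f (0 + 1 + 1) =
      f (3 * 0) * f (3 * 0 + 1) * f (3 * 0 + 2)
    show f 0 * f (0 + 1) * f (0 + 1 + 1) = f (3 * 0) * f (3 * 0 + 1) * f (3 * 0 + 2)
    norm_num
  | succ n ih =>
    have h1 : 3 * (n + 1) + 2 = 3 * n + 2 + 1 + 1 + 1 := by omega
    rw [h1, prodSeq_succ, prodSeq_succ, prodSeq_succ, ih, prodSeq_succ]
    simp only [mul_assoc]
    have e1 : 3 * (n + 1) = 3 * n + 2 + 1 := by omega
    rw [e1]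

/-- products of exactly `m+1` elements of `E` (additive closure) -/
def SPgrp (E : Set R) (m : ℕ) : AddSubgroup R :=
  AddSubgroup.closure {z | ∃ f : ℕ → R, (∀ i, f i ∈ E) ∧ z = prodSeq f m}

lemma SPgrp_mul {E : Set R} {p q : ℕ} {x y : R} (hx : x ∈ SPgrp E p)
    (hy : y ∈ SPgrp E q) : x * y ∈ SPgrp E (p + q + 1) := by
  induction hx using AddSubgroup.closure_induction with
  | zero => rw [zero_mul]; exact zero_mem _
  | add a b _ _ ha hb => rw [add_mul]; exact add_mem ha hb
  | neg a _ ha => rw [neg_mul]; exact neg_mem ha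
  | mem u hu =>
    induction hy using AddSubgroup.closure_induction with
    | zero => rw [mul_zero]; exact zero_mem _
    | add a b _ _ ha hb => rw [mul_add]; exact add_mem ha hb
    | neg a _ ha => rw [mul_neg]; exact neg_mem ha
    | mem v hv =>
      obtain ⟨f, hf, rfl⟩ := hu
      obtain ⟨g, hg, rfl⟩ := hv
      refine AddSubgroup.subset_closure ⟨_, ?_, prodSeq_concat f g p q⟩
      intro i
      by_cases hip : i ≤ p
      · rw [if_pos hip]
        exact hf i
      · rw [if_neg hip]
        exact hg _

/-- the subgroup generated by pairwise products -/
def sqGrp (G : AddSubgroup R) : AddSubgroup R :=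
  AddSubgroup.closure {z | ∃ x ∈ G, ∃ y ∈ G, z = x * y}

lemma sqGrp_le_SPgrp {E : Set R} {p : ℕ} {G : AddSubgroup R} (h : G ≤ SPgrp E p) :
    sqGrp G ≤ SPgrp E (p + p + 1) := by
  refine (AddSubgroup.closure_le _).2 ?_
  rintro z ⟨x, hx, y, hy, rfl⟩
  exact SPgrp_mul (h hx) (h hy)

end ProdSeqLemmas

section Direction1

variable (k H : Type*) {R : Type*} [CommRing k] [Ring H] [Algebra k H]
  [Coalgebra k H] [NonUnitalRing R] [Module k R]
  [SMulCommClass k R R] [IsScalarTower k R R] [HModAlg k H R]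

lemma isHIdeal_sqGrp {G : AddSubgroup R} (hG : IsHIdeal k H (G : Set R)) :
    IsHIdeal k H (sqGrp G : Set R) := by
  refine ⟨Set.subset_univ _, zero_mem _, fun hx hy => add_mem hx hy, fun hx => neg_mem hx,
    ?_, ?_, ?_⟩
  · intro x _ y hy
    induction hy using AddSubgroup.closure_induction with
    | zero => rw [mul_zero]; exact zero_mem _
    | add a b _ _ ha hb => rw [mul_add]; exact add_mem ha hb
    | neg a _ ha => rw [mul_neg]; exact neg_mem ha
    | mem w hw =>
      obtain ⟨u, hu, v, hv, rfl⟩ := hw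
      exact AddSubgroup.subset_closure ⟨x * u, hG.mul_left x hu, v, hv, (mul_assoc ..).symm⟩
  · intro x hx y _
    induction hx using AddSubgroup.closure_induction with
    | zero => rw [zero_mul]; exact zero_mem _
    | add a b _ _ ha hb => rw [add_mul]; exact add_mem ha hb
    | neg a _ ha => rw [neg_mul]; exact neg_mem ha
    | mem w hw =>
      obtain ⟨u, hu, v, hv, rfl⟩ := hw
      exact AddSubgroup.subset_closure ⟨u, hu, v * y, hG.mul_right hv y, mul_assoc ..⟩
  · intro h x hx
    induction hx using AddSubgroup.closure_induction with
    | zero => rw [hact_zero]; exact zero_mem _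
    | add a b _ _ ha hb => rw [hact_add]; exact add_mem ha hb
    | neg a _ ha => rw [hact_neg]; exact neg_mem ha
    | mem w hw =>
      obtain ⟨u, hu, v, hv, rfl⟩ := hw
      exact hact_mul_mem k H (sqGrp G) (fun g g' => AddSubgroup.subset_closure
        ⟨hact k H g u, hG.hsmul_mem g hu, hact k H g' v, hG.hsmul_mem g' hv, rfl⟩) h

lemma radical_subset_prime {I P : Set R} (hI : IsRadicalHIdeal k H I)
    (hP : P ∈ PrimeSet k H) : I ⊆ P := by
  by_contra hIP
  obtain ⟨a, haI, haP⟩ := Set.not_subset.1 hIP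
  obtain ⟨hIid, hrad⟩ := hI
  have hJin : IsHIdealIn k H I (P ∩ I) := by
    refine ⟨Set.inter_subset_right, ⟨hP.1.zero_mem, hIid.zero_mem⟩, ?_, ?_, ?_, ?_, ?_⟩
    · rintro x y ⟨hx1, hx2⟩ ⟨hy1, hy2⟩
      exact ⟨hP.1.add_mem hx1 hy1, hIid.add_mem hx2 hy2⟩
    · rintro x ⟨hx1, hx2⟩
      exact ⟨hP.1.neg_mem hx1, hIid.neg_mem hx2⟩
    · rintro x hxI y ⟨hy1, hy2⟩
      exact ⟨hP.1.mul_left x hy1, IsHIdealIn.mul_mem_left hIid (Set.mem_univ x) hy2⟩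
    · rintro x ⟨hx1, hx2⟩ y hyI
      exact ⟨hP.1.mul_right hx1 y, IsHIdealIn.mul_mem_right hIid hx2 (Set.mem_univ y)⟩
    · rintro h x ⟨hx1, hx2⟩
      exact ⟨hP.1.hsmul_mem h hx1, hIid.hsmul_mem h hx2⟩
  have hJne : P ∩ I ≠ I := by
    intro he
    rw [← he] at haI
    exact haP haI.1
  obtain ⟨K, hKin, hJK, hJneK, n, hnil⟩ := hrad _ hJin hJne
  have hKH : ∀ (h : H) {c : R}, c ∈ K → hact k H h c ∈ K := fun h {c} hc => hKin.hsmul_mem h hc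
  have hAid : IsHIdeal k H (genGrp K Set.univ : Set R) := isHIdeal_genGrp k H hKH
  have hKI : K ⊆ I := hKin.subset
  have hKP : ¬K ⊆ P := by
    intro hsub
    exact hJneK (subset_antisymm hJK (fun x hx => ⟨hsub hx, hKI hx⟩))
  have hAP : ¬(genGrp K Set.univ : Set R) ⊆ P :=
    fun hsub => hKP (fun x hx => hsub (core_mem_genGrp hx))
  have hgenI : genSet K Set.univ ⊆ I := by
    rintro z ⟨c, hc, h | ⟨u, -, h⟩ | ⟨v, -, h⟩ | ⟨u, -, v, -, h⟩⟩ <;> rw [h]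
    · exact hKI hc
    · exact hIid.mul_left u (hKI hc)
    · exact hIid.mul_right (hKI hc) v
    · exact hIid.mul_right (hIid.mul_left u (hKI hc)) v
  have htriple : ∀ t₁ ∈ genSet K Set.univ, ∀ t₂ ∈ genSet K Set.univ,
      ∀ t₃ ∈ genSet K Set.univ, t₁ * t₂ * t₃ ∈ K := by
    intro t₁ h₁ t₂ h₂ t₃ h₃
    have h₁I : t₁ ∈ I := hgenI h₁
    have h₃I : t₃ ∈ I := hgenI h₃
    obtain ⟨c, hc, h | ⟨u, -, h⟩ | ⟨v, -, h⟩ | ⟨u, -, v, -, h⟩⟩ := h₂ <;> rw [h]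
    · exact hKin.mul_mem_right (hKin.mul_mem_left h₁I hc) h₃I
    · have he : t₁ * (u * c) * t₃ = ((t₁ * u) * c) * t₃ := by simp only [mul_assoc]
      rw [he]
      exact hKin.mul_mem_right (hKin.mul_mem_left (hIid.mul_right h₁I u) hc) h₃I
    · have he : t₁ * (c * v) * t₃ = (t₁ * c) * (v * t₃) := by simp only [mul_assoc]
      rw [he]
      exact hKin.mul_mem_right (hKin.mul_mem_left h₁I hc) (hIid.mul_left v h₃I)
    · have he : t₁ * (u * c * v) * t₃ = ((t₁ * u) * c) * (v * t₃) := by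
        simp only [mul_assoc]
      rw [he]
      exact hKin.mul_mem_right (hKin.mul_mem_left (hIid.mul_right h₁I u) hc)
        (hIid.mul_left v h₃I)
  have hlong : ∀ m, ∀ f : ℕ → R, (∀ i, f i ∈ genSet K Set.univ) →
      prodSeq f (3 * n + 2 + m) ∈ P ∩ I := by
    intro m
    induction m with
    | zero =>
      intro f hf
      have h0 : 3 * n + 2 + 0 = 3 * n + 2 := by omega
      rw [h0, prodSeq_group3]
      exact hnil _ (fun i => htriple _ (hf _) _ (hf _) _ (hf _))
    | succ m ih =>
      intro f hf
      have h0 : 3 * n + 2 + (m + 1) = (3 * n + 2 + m) + 1 := by omega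
      rw [h0, prodSeq_succ]
      have hm := ih f hf
      exact ⟨hP.1.mul_right hm.1 _, hIid.mul_right hm.2 _⟩
  have hSPsub : ∀ m, 3 * n + 2 ≤ m → ∀ x ∈ SPgrp (genSet K Set.univ) m, x ∈ P ∩ I := by
    intro m hm x hx
    have hle : SPgrp (genSet K Set.univ) m ≤ hJin.toAddSubgroup := by
      refine (AddSubgroup.closure_le _).2 ?_
      rintro z ⟨f, hf, rfl⟩
      show prodSeq f m ∈ P ∩ I
      have h0 : m = 3 * n + 2 + (m - (3 * n + 2)) := by omega
      rw [h0]
      exact hlong _ f hf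
    exact hle hx
  have hQs : ∀ j : ℕ, IsHIdeal k H ((sqGrp^[j] (genGrp K Set.univ) : AddSubgroup R) : Set R) ∧
      ¬((sqGrp^[j] (genGrp K Set.univ) : AddSubgroup R) : Set R) ⊆ P ∧
      ∃ m, j ≤ m ∧ sqGrp^[j] (genGrp K Set.univ) ≤ SPgrp (genSet K Set.univ) m := by
    intro j
    induction j with
    | zero =>
      refine ⟨hAid, hAP, 0, le_rfl, ?_⟩
      refine (AddSubgroup.closure_le _).2 ?_
      intro z hz
      exact AddSubgroup.subset_closure ⟨fun _ => z, fun _ => hz, rfl⟩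
    | succ j ih =>
      obtain ⟨hid, hnsub, m, hjm, hle⟩ := ih
      have hQsucc : sqGrp^[j + 1] (genGrp K Set.univ) = sqGrp (sqGrp^[j] (genGrp K Set.univ)) :=
        Function.iterate_succ_apply' _ _ _
      rw [hQsucc]
      refine ⟨isHIdeal_sqGrp k H hid, ?_, m + m + 1, by omega, sqGrp_le_SPgrp hle⟩
      intro hsub
      have hall : ∀ q ∈ (sqGrp^[j] (genGrp K Set.univ) : Set R), ∀ r : R,
          ∀ q' ∈ (sqGrp^[j] (genGrp K Set.univ) : Set R), q * r * q' ∈ P := by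
        intro q hq r q' hq'
        exact hsub (AddSubgroup.subset_closure ⟨q * r, hid.mul_right hq r, q', hq', rfl⟩)
      rcases hP.2 _ _ hid hid hall with hsP | hsP
      · exact hnsub hsP
      · exact hnsub hsP
  obtain ⟨hid, hnsub, m, hjm, hle⟩ := hQs (3 * n + 2)
  refine hnsub ?_
  intro x hx
  exact (hSPsub m hjm _ (hle hx)).1

end Direction1

section Direction2

variable (k H : Type*) {R : Type*} [CommRing k] [Ring H] [Algebra k H]
  [Coalgebra k H] [NonUnitalRing R] [Module k R]
  [SMulCommClass k R R] [IsScalarTower k R R] [HModAlg k H R]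

lemma isRadical_WHset : IsRadicalHIdeal k H (WHset k H (R := R)) := by
  have hW : IsHIdeal k H (WHset k H (R := R)) := isHIdeal_WHset k H
  refine ⟨hW, ?_⟩
  intro J hJ hJne
  have hWmul : ∀ u ∈ WHset k H (R := R), ∀ v ∈ WHset k H (R := R),
      u * v ∈ WHset k H (R := R) := fun u hu v _ => hW.mul_right hu v
  have hstep1 : ∃ a, a ∈ WHset k H (R := R) ∧ a ∉ J ∧
      ∀ (g : H) (c : R) (g' : H), hact k H g a * c * hact k H g' a ∈ J := by
    by_contra hcon
    push_neg at hcon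
    obtain ⟨a₀, ha₀W, ha₀J⟩ : ∃ x, x ∈ WHset k H (R := R) ∧ x ∉ J := by
      obtain ⟨x, hxW, hxJ⟩ := Set.not_subset.1
        (fun hsub : WHset k H (R := R) ⊆ J => hJne (subset_antisymm hJ.subset hsub))
      exact ⟨x, hxW, hxJ⟩
    have hstepfun : ∀ x : R, (x ∈ WHset k H (R := R) ∧ x ∉ J) →
        ∃ (g : H) (r : R) (g' : H),
          (hact k H g x * r * hact k H g' x ∈ WHset k H (R := R) ∧
            hact k H g x * r * hact k H g' x ∉ J) := by
      rintro x ⟨hxW, hxJ⟩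
      obtain ⟨g, c, g', hgp⟩ := hcon x hxW hxJ
      refine ⟨g, c, g', ⟨?_, hgp⟩⟩
      exact hW.mul_right (hW.mul_right (hW.hsmul_mem g hxW) c) _
    obtain ⟨s, b, h, h', hs0, hrec, hgood⟩ := exists_mseq k H
      (fun x => x ∈ WHset k H (R := R) ∧ x ∉ J) a₀ ⟨ha₀W, ha₀J⟩ hstepfun
    obtain ⟨n, hn⟩ := ha₀W s b h h' hs0 hrec
    exact (hgood n).2 (by rw [hn]; exact hJ.zero_mem)
  obtain ⟨a, haW, haJ, hgoodprod⟩ := hstep1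
  set Ca : Set R := {z | ∃ g : H, z = hact k H g a} with hCadef
  have hCaH : ∀ (h : H) {c : R}, c ∈ Ca → hact k H h c ∈ Ca := by
    rintro h c ⟨g, rfl⟩
    exact ⟨h * g, hact_hact k H h g a⟩
  have hCaW : Ca ⊆ WHset k H (R := R) := by
    rintro z ⟨g, rfl⟩
    exact hW.hsmul_mem g haW
  have hTW : (genGrp Ca (WHset k H (R := R)) : Set R) ⊆ WHset k H (R := R) := by
    intro z hz
    have hle : genGrp Ca (WHset k H (R := R)) ≤ IsHIdealIn.toAddSubgroup hW := by
      refine (AddSubgroup.closure_le _).2 ?_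
      rintro w ⟨c, hc, hw | ⟨u, hu, hw⟩ | ⟨v, hv, hw⟩ | ⟨u, hu, v, hv, hw⟩⟩ <;> rw [hw]
      · exact hCaW hc
      · exact hWmul u hu _ (hCaW hc)
      · exact hWmul _ (hCaW hc) v hv
      · exact hWmul _ (hWmul u hu _ (hCaW hc)) v hv
    exact hle hz
  refine ⟨{z : R | ∃ j ∈ J, ∃ t ∈ (genGrp Ca (WHset k H (R := R)) : Set R), z = j + t},
    ?_, ?_, ?_, 2, ?_⟩
  · refine ⟨?_, ⟨0, hJ.zero_mem, 0, zero_mem _, (add_zero (0:R)).symm⟩, ?_, ?_, ?_, ?_, ?_⟩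
    · rintro z ⟨j, hj, t, ht, rfl⟩
      exact hW.add_mem (hJ.subset hj) (hTW ht)
    · rintro x y ⟨j, hj, t, ht, rfl⟩ ⟨j', hj', t', ht', rfl⟩
      exact ⟨j + j', hJ.add_mem hj hj', t + t', add_mem ht ht', by abel⟩
    · rintro x ⟨j, hj, t, ht, rfl⟩
      exact ⟨-j, hJ.neg_mem hj, -t, neg_mem ht, by abel⟩
    · rintro x hx y ⟨j, hj, t, ht, rfl⟩
      exact ⟨x * j, hJ.mul_mem_left hx hj, x * t, genGrp_mul_left hWmul hx ht, mul_add ..⟩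
    · rintro x ⟨j, hj, t, ht, rfl⟩ y hy
      exact ⟨j * y, hJ.mul_mem_right hj hy, t * y, genGrp_mul_right hWmul hy ht, add_mul ..⟩
    · rintro h x ⟨j, hj, t, ht, rfl⟩
      exact ⟨hact k H h j, hJ.hsmul_mem h hj, hact k H h t,
        genGrp_hact k H hCaH (fun h {u} hu => hW.hsmul_mem h hu) h ht, hact_add ..⟩
  · intro j hj
    exact ⟨j, hj, 0, zero_mem _, (add_zero j).symm⟩
  · intro he
    have hmem : a ∈ {z : R | ∃ j ∈ J, ∃ t ∈ (genGrp Ca (WHset k H (R := R)) : Set R),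
        z = j + t} :=
      ⟨0, hJ.zero_mem, a, core_mem_genGrp ⟨1, (hact_one k H a).symm⟩, (zero_add a).symm⟩
    rw [← he] at hmem
    exact haJ hmem
  · intro f hf
    obtain ⟨j₀, hj₀, t₀, ht₀, he₀⟩ := hf 0
    obtain ⟨j₁, hj₁, t₁, ht₁, he₁⟩ := hf 1
    obtain ⟨j₂, hj₂, t₂, ht₂, he₂⟩ := hf 2
    show prodSeq f 2 ∈ J
    have hp2 : prodSeq f 2 = f 0 * f 1 * f 2 := rfl
    rw [hp2, he₀, he₁, he₂]
    have hT₀W : t₀ ∈ WHset k H (R := R) := hTW ht₀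
    have hT₁W : t₁ ∈ WHset k H (R := R) := hTW ht₁
    have h2 : (j₀ + t₀) * (j₁ + t₁) * (j₂ + t₂)
        = (j₀ * (j₁ + t₁) + t₀ * j₁) * (j₂ + t₂) + ((t₀ * t₁) * j₂ + (t₀ * t₁) * t₂) := by
      rw [add_mul j₀ t₀, mul_add t₀ j₁ t₁, ← add_assoc, add_mul, mul_add (t₀ * t₁)]
    rw [h2]
    have hmem12 : j₁ + t₁ ∈ WHset k H (R := R) := hW.add_mem (hJ.subset hj₁) (hTW ht₁)
    have hmem3 : j₂ + t₂ ∈ WHset k H (R := R) := hW.add_mem (hJ.subset hj₂) (hTW ht₂)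
    refine hJ.add_mem (hJ.mul_mem_right ?_ hmem3) (hJ.add_mem ?_ ?_)
    · exact hJ.add_mem (hJ.mul_mem_right hj₀ hmem12) (hJ.mul_mem_left hT₀W hj₁)
    · exact hJ.mul_mem_left (hWmul _ hT₀W _ hT₁W) hj₂
    · refine strip hJ.zero_mem (fun x hx y hy => hJ.add_mem hx hy)
        (fun x hx => hJ.neg_mem hx) (fun u hu z hz => hJ.mul_mem_left hu hz)
        (fun z hz v hv => hJ.mul_mem_right hz hv) ?_ ht₀ t₁ ht₂
      rintro c₁ ⟨g, rfl⟩ r c₂ ⟨g', rfl⟩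
      exact hgoodprod g r g'

end Direction2

/-- `r_{Hb}(R) = W_H(R)`. -/
theorem stmt10 {k H R : Type*} [CommRing k] [Ring H] [Algebra k H] [Coalgebra k H]
    [NonUnitalRing R] [Module k R] [SMulCommClass k R R] [IsScalarTower k R R]
    [HModAlg k H R] (B : Set R) (hB : IsHBaerRadical k H B) :
    B = WHset k H (R := R) := by
  have hBW : B ⊆ WHset k H (R := R) := by
    rw [WHset_eq_sInter]
    intro x hx P hP
    exact radical_subset_prime k H hB.1 hP hx
  exact subset_antisymm hBW (hB.2 _ (isRadical_WHset k H))
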